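/- Consider the interval domain over ℤ ∪ {−∞, +∞} with the standard widening ([a,b] ▽ [c,d] extends a to −∞ if c < a and b to +∞ if d > b) and standard narrowing ([a,b] △ [c,d] replaces an infinite bound of [a,b] by the corresponding bound of [c,d]). Let ⊟ be the combined operator. Then ([0,0] ⊟ [0,1]) ⊟ [0,1] = [0,1], i.e., the widening to [0,∞] performed at the first application is immediately undone by the subsequent narrowing; consequently the sequence w₀ = [0,0], w_{i+1} = w_i ⊟ [0, i+1] is not eventually stationary. -/
import Mathlib


/-- An interval [lo, hi] with lo ∈ ℤ ∪ {−∞} and hi ∈ ℤ ∪ {+∞}. -/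
structure Itv where
  lo : WithBot ℤ
  hi : WithTop ℤ
  deriving DecidableEq

/-- Interval inclusion: `I.subset J` means I ⊆ J. -/
def Itv.subset (I J : Itv) : Prop := J.lo ≤ I.lo ∧ I.hi ≤ J.hi

/- Standard interval widening. -/
open Classical in
noncomputable def Itv.widen (I J : Itv) : Itv :=
  ⟨if I.lo ≤ J.lo then I.lo else ⊥, if J.hi ≤ I.hi then I.hi else ⊤⟩

/- Standard interval narrowing (for J ⊆ I): infinite bounds of I are
replaced by the corresponding bounds of J. -/
open Classical in
noncomputable def Itv.narrow (I J : Itv) : Itv :=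
  ⟨if I.lo = ⊥ then J.lo else I.lo, if I.hi = ⊤ then J.hi else I.hi⟩

/- Combined operator: narrow if J ⊆ I, widen otherwise. -/
open Classical in
noncomputable def Itv.box (I J : Itv) : Itv :=
  if J.subset I then I.narrow J else I.widen J

/-- The sequence w₀ = [0,0], w_{i+1} = w_i ⊟ [0, i+1]. -/
noncomputable def wseq : ℕ → Itv
  | 0 => ⟨((0 : ℤ) : WithBot ℤ), ((0 : ℤ) : WithTop ℤ)⟩
  | i+1 => (wseq i).box ⟨((0 : ℤ) : WithBot ℤ), (((i : ℤ) + 1) : WithTop ℤ)⟩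

lemma boxA (c d : ℤ) (h : c < d) :
    Itv.box ⟨((0 : ℤ) : WithBot ℤ), ((c : ℤ) : WithTop ℤ)⟩
      ⟨((0 : ℤ) : WithBot ℤ), ((d : ℤ) : WithTop ℤ)⟩ =
    ⟨((0 : ℤ) : WithBot ℤ), ⊤⟩ := by
  simp [Itv.box, Itv.subset, Itv.widen, Itv.narrow, h.not_ge, h.le]

lemma boxB (d : ℤ) :
    Itv.box ⟨((0 : ℤ) : WithBot ℤ), (⊤ : WithTop ℤ)⟩
      ⟨((0 : ℤ) : WithBot ℤ), ((d : ℤ) : WithTop ℤ)⟩ =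
    ⟨((0 : ℤ) : WithBot ℤ), ((d : ℤ) : WithTop ℤ)⟩ := by
  simp [Itv.box, Itv.subset, Itv.widen, Itv.narrow]

lemma wseq_pattern (i : ℕ) :
    wseq (2*i+1) = ⟨((0 : ℤ) : WithBot ℤ), (⊤ : WithTop ℤ)⟩ ∧
    wseq (2*i+2) =
      ⟨((0 : ℤ) : WithBot ℤ), (((((2*i+1 : ℕ) : ℤ) + 1) : ℤ) : WithTop ℤ)⟩ := by
  induction i with
  | zero =>
    have h1 : wseq 1 = ⟨((0 : ℤ) : WithBot ℤ), (⊤ : WithTop ℤ)⟩ := by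
      show Itv.box (wseq 0) _ = _
      rw [show wseq 0 = ⟨((0 : ℤ) : WithBot ℤ), ((0 : ℤ) : WithTop ℤ)⟩ from rfl]
      exact boxA 0 _ (by norm_num)
    constructor
    · rw [show 2*0+1 = 1 from by norm_num]; exact h1
    · rw [show (2*0+1 : ℕ) = 1 from by norm_num, show (2*0+2 : ℕ) = 1+1 from by norm_num,
        wseq, h1]
      exact boxB _
  | succ n ih =>
    obtain ⟨h1, h2⟩ := ih
    have e3 : wseq (2*(n+1)+1) = ⟨((0 : ℤ) : WithBot ℤ), (⊤ : WithTop ℤ)⟩ := by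
      rw [show 2*(n+1)+1 = (2*n+2)+1 from by ring, wseq, h2]
      exact boxA _ _ (by push_cast; omega)
    refine ⟨e3, ?_⟩
    rw [show 2*(n+1)+2 = (2*(n+1)+1)+1 from rfl, wseq, e3]
    exact boxB _

theorem stmt14 :
    Itv.box ⟨((0 : ℤ) : WithBot ℤ), ((0 : ℤ) : WithTop ℤ)⟩
        ⟨((0 : ℤ) : WithBot ℤ), ((1 : ℤ) : WithTop ℤ)⟩ =
      ⟨((0 : ℤ) : WithBot ℤ), ⊤⟩ ∧
    Itv.box (Itv.box ⟨((0 : ℤ) : WithBot ℤ), ((0 : ℤ) : WithTop ℤ)⟩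
        ⟨((0 : ℤ) : WithBot ℤ), ((1 : ℤ) : WithTop ℤ)⟩)
        ⟨((0 : ℤ) : WithBot ℤ), ((1 : ℤ) : WithTop ℤ)⟩ =
      ⟨((0 : ℤ) : WithBot ℤ), ((1 : ℤ) : WithTop ℤ)⟩ ∧
    ¬ ∃ N : ℕ, ∀ i, N ≤ i → wseq (i+1) = wseq i := by
  have hA := boxA 0 1 (by norm_num)
  refine ⟨hA, by rw [hA]; exact boxB 1, ?_⟩
  rintro ⟨N, hN⟩
  obtain ⟨h1, h2⟩ := wseq_pattern N
  have h := hN (2*N+1) (by omega)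
  rw [show 2*N+1+1 = 2*N+2 from rfl, h1, h2] at h
  exact WithTop.coe_ne_top (congrArg Itv.hi h)
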